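/- arXiv:1703.05989 — 4 statements merged into one kernel-verified Lean document; each statement's English description precedes it below -/
import Mathlib

section
/- For every λ > 0 and every real symmetric 2×2 matrix ξ one has G_λ(ξ) ≥ (1/2)·ρ⁰(ξ). -/
set_option maxHeartbeats 1000000
open Matrix Real

/-- First eigenvalue of a (symmetric) 2×2 real matrix. -/
noncomputable def eig1 (ξ : Matrix (Fin 2) (Fin 2) ℝ) : ℝ :=
  (ξ.trace + Real.sqrt (ξ.trace ^ 2 - 4 * ξ.det)) / 2

/-- Second eigenvalue of a (symmetric) 2×2 real matrix. -/
noncomputable def eig2 (ξ : Matrix (Fin 2) (Fin 2) ℝ) : ℝ :=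
  (ξ.trace - Real.sqrt (ξ.trace ^ 2 - 4 * ξ.det)) / 2

/-- ρ⁰(ξ) = |λ₁(ξ)| + |λ₂(ξ)|. -/
noncomputable def rho0 (ξ : Matrix (Fin 2) (Fin 2) ℝ) : ℝ :=
  |eig1 ξ| + |eig2 ξ|

/-- G_λ(ξ) = 2(ρ⁰(ξ) − λ^{-1/2}|det ξ|) if ρ⁰(ξ) ≤ √λ, and λ^{1/2} + λ^{-1/2}|ξ|² otherwise. -/
noncomputable def Glam (lam : ℝ) (ξ : Matrix (Fin 2) (Fin 2) ℝ) : ℝ :=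
  if rho0 ξ ≤ Real.sqrt lam then 2 * (rho0 ξ - |ξ.det| / Real.sqrt lam)
  else Real.sqrt lam + (∑ i, ∑ j, (ξ i j) ^ 2) / Real.sqrt lam

/-- For every λ > 0 and every real symmetric 2×2 matrix ξ, G_λ(ξ) ≥ (1/2)ρ⁰(ξ). -/
theorem half_rho0_le_Glam (lam : ℝ) (hlam : 0 < lam)
    (ξ : Matrix (Fin 2) (Fin 2) ℝ) (hξ : ξ.IsSymm) :
    (1 / 2) * rho0 ξ ≤ Glam lam ξ := by
  set a := ξ 0 0 with ha
  set b := ξ 0 1 with hb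
  set d := ξ 1 1 with hd
  have hcb : ξ 1 0 = b := by
    have := congrFun (congrFun hξ 1) 0
    simpa [Matrix.transpose_apply] using this.symm
  have ht : ξ.trace = a + d := by
    rw [Matrix.trace_fin_two]
  have hdet : ξ.det = a * d - b * b := by
    rw [Matrix.det_fin_two, hcb]
  set t := ξ.trace with htdef
  set s := Real.sqrt (t ^ 2 - 4 * ξ.det) with hsdef
  have hdisc : 0 ≤ t ^ 2 - 4 * ξ.det := by
    rw [ht, hdet]; nlinarith [sq_nonneg (a - d), sq_nonneg b]
  have hs0 : 0 ≤ s := Real.sqrt_nonneg _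
  have hs2 : s ^ 2 = t ^ 2 - 4 * ξ.det := Real.sq_sqrt hdisc
  have he1 : eig1 ξ = (t + s) / 2 := rfl
  have he2 : eig2 ξ = (t - s) / 2 := rfl
  have hprod : eig1 ξ * eig2 ξ = ξ.det := by
    rw [he1, he2]; nlinarith [hs2]
  have habs : |eig1 ξ| * |eig2 ξ| = |ξ.det| := by
    rw [← abs_mul, hprod]
  have hsum : (∑ i, ∑ j, (ξ i j) ^ 2) = eig1 ξ ^ 2 + eig2 ξ ^ 2 := by
    rw [Fin.sum_univ_two, Fin.sum_univ_two, Fin.sum_univ_two, hcb, he1, he2]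
    have := hs2
    rw [ht, hdet] at this
    nlinarith [this]
  have hr : rho0 ξ = |eig1 ξ| + |eig2 ξ| := rfl
  set r := rho0 ξ with hrdef
  set S := (∑ i, ∑ j, (ξ i j) ^ 2) with hSdef
  have hr0 : 0 ≤ r := by rw [hr]; positivity
  have hr2 : r ^ 2 = eig1 ξ ^ 2 + eig2 ξ ^ 2 + 2 * |ξ.det| := by
    rw [hr, ← habs, ← sq_abs (eig1 ξ), ← sq_abs (eig2 ξ)]; ring
  set q := Real.sqrt lam with hq
  have hq0 : 0 < q := Real.sqrt_pos.mpr hlam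
  set e1 := eig1 ξ with he1def
  set e2 := eig2 ξ with he2def
  set D := ξ.det with hDdef
  clear_value a b d t s r S q e1 e2 D
  have hdabs : 4 * |D| ≤ r ^ 2 := by
    rw [hr2, ← habs]
    nlinarith [sq_nonneg (|e1| - |e2|), sq_abs e1, sq_abs e2]
  rw [Glam]
  simp only [← hrdef, ← hq, ← hSdef, ← hDdef]
  split_ifs with h
  · have hrr : r * r ≤ r * q := mul_le_mul_of_nonneg_left h hr0
    have hdiv : |D| / q ≤ r / 4 := by
      rw [div_le_div_iff₀ hq0 (by norm_num)]
      nlinarith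
    linarith
  · push_neg at h
    have hsumge : r ^ 2 ≤ 2 * S := by
      rw [hsum, hr2, ← habs]
      nlinarith [sq_nonneg (|e1| - |e2|), sq_abs e1, sq_abs e2]
    have h1 : r * q ≤ r ^ 2 := by nlinarith
    have hdiv : r / 2 ≤ S / q := by
      rw [div_le_div_iff₀ (by norm_num) hq0]
      nlinarith
    linarith
end

section
/- There exists a constant C > 0, independent of λ, such that for every λ > 0 and all real symmetric 2×2 matrices A and B one has G_λ(A + B) ≤ C·(G_λ(A) + G_λ(B)). -/
open Matrix Real

/-- The "off-diagonal" part √((ξ₀₀-ξ₁₁)² + (2ξ₀₁)²); for a symmetric matrix this equals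
the square root of the discriminant tr² - 4 det. -/
noncomputable def dd (ξ : Matrix (Fin 2) (Fin 2) ℝ) : ℝ :=
  Real.sqrt ((ξ 0 0 - ξ 1 1) ^ 2 + (2 * ξ 0 1) ^ 2)

lemma dd_nonneg (ξ : Matrix (Fin 2) (Fin 2) ℝ) : 0 ≤ dd ξ := Real.sqrt_nonneg _

lemma dd_sq (ξ : Matrix (Fin 2) (Fin 2) ℝ) :
    (dd ξ) ^ 2 = (ξ 0 0 - ξ 1 1) ^ 2 + (2 * ξ 0 1) ^ 2 :=
  Real.sq_sqrt (by positivity)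

lemma abs_avg (t s : ℝ) (hs : 0 ≤ s) : |(t + s) / 2| + |(t - s) / 2| = max |t| s := by
  rcases le_total |t| s with h | h
  · have h1 := abs_le.mp h
    rw [max_eq_right h, abs_of_nonneg (by linarith [h1.1] : (0:ℝ) ≤ (t + s) / 2),
      abs_of_nonpos (by linarith [h1.2] : (t - s) / 2 ≤ 0)]
    ring
  · rcases le_total 0 t with ht | ht
    · rw [abs_of_nonneg ht] at h ⊢
      rw [max_eq_left h, abs_of_nonneg (by linarith : (0:ℝ) ≤ (t + s) / 2),
        abs_of_nonneg (by linarith : (0:ℝ) ≤ (t - s) / 2)]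
      ring
    · rw [abs_of_nonpos ht] at h ⊢
      rw [max_eq_left h, abs_of_nonpos (by linarith : (t + s) / 2 ≤ 0),
        abs_of_nonpos (by linarith : (t - s) / 2 ≤ 0)]
      ring

lemma disc_eq {ξ : Matrix (Fin 2) (Fin 2) ℝ} (h : ξ.IsSymm) :
    ξ.trace ^ 2 - 4 * ξ.det = (ξ 0 0 - ξ 1 1) ^ 2 + (2 * ξ 0 1) ^ 2 := by
  have hbc : ξ 1 0 = ξ 0 1 := h.apply 0 1
  rw [Matrix.trace_fin_two, Matrix.det_fin_two, hbc]; ring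

lemma rho0_eq {ξ : Matrix (Fin 2) (Fin 2) ℝ} (h : ξ.IsSymm) :
    rho0 ξ = max |ξ.trace| (dd ξ) := by
  have hd : Real.sqrt (ξ.trace ^ 2 - 4 * ξ.det) = dd ξ := by rw [disc_eq h, dd]
  rw [rho0, eig1, eig2, hd, abs_avg _ _ (dd_nonneg ξ)]

lemma det_eq {ξ : Matrix (Fin 2) (Fin 2) ℝ} (h : ξ.IsSymm) :
    4 * ξ.det = ξ.trace ^ 2 - (dd ξ) ^ 2 := by
  rw [dd_sq, ← disc_eq h]; ring

lemma frob_eq {ξ : Matrix (Fin 2) (Fin 2) ℝ} (h : ξ.IsSymm) :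
    2 * (∑ i, ∑ j, (ξ i j) ^ 2) = ξ.trace ^ 2 + (dd ξ) ^ 2 := by
  have hbc : ξ 1 0 = ξ 0 1 := h.apply 0 1
  rw [dd_sq, Matrix.trace_fin_two]
  simp [Fin.sum_univ_two, hbc]; ring

lemma sqrt2_subadd (x1 y1 x2 y2 : ℝ) :
    Real.sqrt ((x1 + x2) ^ 2 + (y1 + y2) ^ 2) ≤
      Real.sqrt (x1 ^ 2 + y1 ^ 2) + Real.sqrt (x2 ^ 2 + y2 ^ 2) := by
  set s1 := Real.sqrt (x1 ^ 2 + y1 ^ 2) with hs1def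
  set s2 := Real.sqrt (x2 ^ 2 + y2 ^ 2) with hs2def
  have h1 : s1 ^ 2 = x1 ^ 2 + y1 ^ 2 := Real.sq_sqrt (by positivity)
  have h2 : s2 ^ 2 = x2 ^ 2 + y2 ^ 2 := Real.sq_sqrt (by positivity)
  have h1n : 0 ≤ s1 := Real.sqrt_nonneg _
  have h2n : 0 ≤ s2 := Real.sqrt_nonneg _
  have key : x1 * x2 + y1 * y2 ≤ s1 * s2 := by
    nlinarith [sq_nonneg (x1 * y2 - x2 * y1), mul_nonneg h1n h2n,
      sq_nonneg (s1 * s2 - x1 * x2 - y1 * y2), sq_nonneg (s1 * s2 + x1 * x2 + y1 * y2)]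
  calc Real.sqrt ((x1 + x2) ^ 2 + (y1 + y2) ^ 2)
      ≤ Real.sqrt ((s1 + s2) ^ 2) := by
        apply Real.sqrt_le_sqrt; nlinarith
    _ = s1 + s2 := Real.sqrt_sq (by positivity)

lemma dd_add (A B : Matrix (Fin 2) (Fin 2) ℝ) : dd (A + B) ≤ dd A + dd B := by
  have h := sqrt2_subadd (A 0 0 - A 1 1) (2 * A 0 1) (B 0 0 - B 1 1) (2 * B 0 1)
  unfold dd
  simp only [Matrix.add_apply]
  rw [show (A 0 0 + B 0 0 - (A 1 1 + B 1 1)) ^ 2 + (2 * (A 0 1 + B 0 1)) ^ 2 =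
    ((A 0 0 - A 1 1) + (B 0 0 - B 1 1)) ^ 2 + ((2 * A 0 1) + (2 * B 0 1)) ^ 2 from by ring]
  exact h

lemma rho0_nonneg (ξ : Matrix (Fin 2) (Fin 2) ℝ) : 0 ≤ rho0 ξ :=
  add_nonneg (abs_nonneg _) (abs_nonneg _)

lemma rho0_add {A B : Matrix (Fin 2) (Fin 2) ℝ} (hA : A.IsSymm) (hB : B.IsSymm) :
    rho0 (A + B) ≤ rho0 A + rho0 B := by
  rw [rho0_eq (hA.add hB), rho0_eq hA, rho0_eq hB]
  apply max_le
  · calc |(A + B).trace| = |A.trace + B.trace| := by rw [Matrix.trace_add]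
      _ ≤ |A.trace| + |B.trace| := abs_add_le _ _
      _ ≤ _ := add_le_add (le_max_left _ _) (le_max_left _ _)
  · calc dd (A + B) ≤ dd A + dd B := dd_add A B
      _ ≤ _ := add_le_add (le_max_right _ _) (le_max_right _ _)

lemma aux_facts {lam : ℝ} (hlam : 0 < lam) {ξ : Matrix (Fin 2) (Fin 2) ℝ} (h : ξ.IsSymm) :
    4 * |ξ.det| ≤ (rho0 ξ) ^ 2 ∧
    (∑ i, ∑ j, (ξ i j) ^ 2) ≤ (rho0 ξ) ^ 2 ∧
    (rho0 ξ) ^ 2 ≤ 2 * (∑ i, ∑ j, (ξ i j) ^ 2) := by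
  have hρ := rho0_eq h
  have ht : |ξ.trace| ≤ rho0 ξ := hρ ▸ le_max_left _ _
  have hs : dd ξ ≤ rho0 ξ := hρ ▸ le_max_right _ _
  have ht2 : ξ.trace ^ 2 ≤ (rho0 ξ) ^ 2 := by
    nlinarith [abs_nonneg ξ.trace, sq_abs ξ.trace]
  have hs2 : (dd ξ) ^ 2 ≤ (rho0 ξ) ^ 2 := by nlinarith [dd_nonneg ξ]
  have hmax : (rho0 ξ) ^ 2 ≤ ξ.trace ^ 2 + (dd ξ) ^ 2 := by
    rcases max_cases |ξ.trace| (dd ξ) with ⟨h1, _⟩ | ⟨h1, _⟩ <;> rw [hρ, h1] <;>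
      nlinarith [sq_abs ξ.trace, sq_nonneg (dd ξ), sq_nonneg ξ.trace]
  have hdeteq := det_eq h
  have hfr := frob_eq h
  refine ⟨?_, by nlinarith, by nlinarith⟩
  rcases abs_cases ξ.det with ⟨he, _⟩ | ⟨he, _⟩ <;> nlinarith [sq_nonneg (dd ξ), sq_nonneg ξ.trace]

lemma G_le_f {lam : ℝ} (hlam : 0 < lam) {ξ : Matrix (Fin 2) (Fin 2) ℝ} (h : ξ.IsSymm) :
    Glam lam ξ ≤ 2 * max (rho0 ξ) ((rho0 ξ) ^ 2 / Real.sqrt lam) := by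
  have hμ : 0 < Real.sqrt lam := Real.sqrt_pos.mpr hlam
  obtain ⟨hdet, hfr1, hfr2⟩ := aux_facts hlam h
  have hρ0 := rho0_nonneg ξ
  rw [Glam]
  split_ifs with hc
  · have hd : 0 ≤ |ξ.det| / Real.sqrt lam := by positivity
    have := le_max_left (rho0 ξ) ((rho0 ξ) ^ 2 / Real.sqrt lam)
    linarith
  · push_neg at hc
    have h1 : Real.sqrt lam ≤ (rho0 ξ) ^ 2 / Real.sqrt lam := by
      rw [le_div_iff₀ hμ]; nlinarith
    have h2 : (∑ i, ∑ j, (ξ i j) ^ 2) / Real.sqrt lam ≤ (rho0 ξ) ^ 2 / Real.sqrt lam := by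
      gcongr
    have := le_max_right (rho0 ξ) ((rho0 ξ) ^ 2 / Real.sqrt lam)
    linarith

lemma f_le_G {lam : ℝ} (hlam : 0 < lam) {ξ : Matrix (Fin 2) (Fin 2) ℝ} (h : ξ.IsSymm) :
    max (rho0 ξ) ((rho0 ξ) ^ 2 / Real.sqrt lam) ≤ 2 * Glam lam ξ := by
  have hμ : 0 < Real.sqrt lam := Real.sqrt_pos.mpr hlam
  obtain ⟨hdet, hfr1, hfr2⟩ := aux_facts hlam h
  have hρ0 := rho0_nonneg ξ
  rw [Glam]
  split_ifs with hc
  · have hd : |ξ.det| / Real.sqrt lam ≤ rho0 ξ / 4 := by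
      rw [div_le_iff₀ hμ]; nlinarith
    have hq : (rho0 ξ) ^ 2 / Real.sqrt lam ≤ rho0 ξ := by
      rw [div_le_iff₀ hμ]; nlinarith
    apply max_le <;> linarith
  · push_neg at hc
    have hq : (rho0 ξ) ^ 2 / Real.sqrt lam ≤ 2 * ((∑ i, ∑ j, (ξ i j) ^ 2) / Real.sqrt lam) := by
      rw [show 2 * ((∑ i, ∑ j, (ξ i j) ^ 2) / Real.sqrt lam) =
        (2 * ∑ i, ∑ j, (ξ i j) ^ 2) / Real.sqrt lam from by ring]
      gcongr
    have hρq : rho0 ξ ≤ (rho0 ξ) ^ 2 / Real.sqrt lam := by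
      rw [le_div_iff₀ hμ]; nlinarith
    apply max_le <;> linarith

/-- There is a constant C > 0, independent of λ, with
G_λ(A+B) ≤ C (G_λ(A) + G_λ(B)) for all λ > 0 and all symmetric 2×2 matrices A, B. -/
theorem Glam_triangle :
    ∃ C : ℝ, 0 < C ∧ ∀ (lam : ℝ), 0 < lam →
      ∀ (A B : Matrix (Fin 2) (Fin 2) ℝ), A.IsSymm → B.IsSymm →
        Glam lam (A + B) ≤ C * (Glam lam A + Glam lam B) := by
  refine ⟨8, by norm_num, fun lam hlam A B hA hB => ?_⟩
  have hμ : 0 < Real.sqrt lam := Real.sqrt_pos.mpr hlam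
  set ρa := rho0 A; set ρb := rho0 B; set ρc := rho0 (A + B)
  have hρa := rho0_nonneg A; have hρb := rho0_nonneg B; have hρc := rho0_nonneg (A + B)
  have h1 := G_le_f hlam (hA.add hB)
  have h2 := f_le_G hlam hA
  have h3 := f_le_G hlam hB
  have hsum := rho0_add hA hB
  have hfa := le_max_left ρa (ρa ^ 2 / Real.sqrt lam)
  have hfa' := le_max_right ρa (ρa ^ 2 / Real.sqrt lam)
  have hfb := le_max_left ρb (ρb ^ 2 / Real.sqrt lam)
  have hfb' := le_max_right ρb (ρb ^ 2 / Real.sqrt lam)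
  have h4 : max ρc (ρc ^ 2 / Real.sqrt lam) ≤
      2 * (max ρa (ρa ^ 2 / Real.sqrt lam) + max ρb (ρb ^ 2 / Real.sqrt lam)) := by
    have hfb0 : 0 ≤ max ρb (ρb ^ 2 / Real.sqrt lam) := le_trans hρb hfb
    have hfa0 : 0 ≤ max ρa (ρa ^ 2 / Real.sqrt lam) := le_trans hρa hfa
    apply max_le
    · linarith
    · have hsq : ρc ^ 2 / Real.sqrt lam ≤ (2 * ρa ^ 2 + 2 * ρb ^ 2) / Real.sqrt lam := by
        gcongr
        nlinarith [hsum, hρc, hρa, hρb, sq_nonneg (ρa - ρb), sq_nonneg (ρa + ρb)]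
      have heq : (2 * ρa ^ 2 + 2 * ρb ^ 2) / Real.sqrt lam =
          2 * (ρa ^ 2 / Real.sqrt lam) + 2 * (ρb ^ 2 / Real.sqrt lam) := by ring
      linarith
  linarith
end

section
/- Let α, β ∈ ℝ, t ∈ [0,1], ε > 0, and let u_t : [0,1] → ℝ be defined by u_t(x) = (1/2)(tα + (1−t)β)x². Then there exist disjoint open sets I, J ⊂ (0,1) with closure(I) ∪ closure(J) = [0,1], Lebesgue measure |I| = t and |J| = 1 − t, and a continuously differentiable function u : [0,1] → ℝ with Lipschitz derivative, such that u(0) = u_t(0), u′(0) = u_t′(0), u(1) = u_t(1), u′(1) = u_t′(1), sup_{[0,1]}|u − u_t| + sup_{[0,1]}|u′ − u_t′| < ε, u is twice differentiable at every point of I with u″(x) = α for x ∈ I, and u is twice differentiable at every point of J with u″(x) = β for x ∈ J. -/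
open Set MeasureTheory
open scoped ENNReal NNReal
set_option maxHeartbeats 4000000

private lemma quadDeriv (A B C x : ℝ) : HasDerivAt (fun z => A*z^2 + B*z + C) (2*A*x + B) x := by
  have h := (((hasDerivAt_pow 2 x).const_mul A).add (((hasDerivAt_id' x).const_mul B).add_const C))
  refine (h.congr_deriv ?_).congr_of_eventuallyEq (Filter.Eventually.of_forall fun z => ?_)
  · norm_num; ring
  · simp only [Pi.add_apply]; ring

private lemma glueDeriv {f fl fr : ℝ → ℝ} {lo p hi d : ℝ} (h1 : lo < p) (h2 : p < hi)
    (hfl : ∀ z ∈ Set.Icc lo p, f z = fl z) (hfr : ∀ z ∈ Set.Icc p hi, f z = fr z)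
    (hl : HasDerivAt fl d p) (hr : HasDerivAt fr d p) : HasDerivAt f d p := by
  have Hl : HasDerivWithinAt f d (Set.Iic p) p := by
    have h := (hl.hasDerivWithinAt (s := Set.Icc lo p)).congr hfl (hfl p ⟨h1.le, le_rfl⟩)
    exact h.mono_of_mem_nhdsWithin (Icc_mem_nhdsLE h1)
  have Hr : HasDerivWithinAt f d (Set.Ici p) p := by
    have h := (hr.hasDerivWithinAt (s := Set.Icc p hi)).congr hfr (hfr p ⟨le_rfl, h2.le⟩)
    exact h.mono_of_mem_nhdsWithin (Icc_mem_nhdsGE h2)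
  have h := Hl.union Hr
  rwa [Set.Iic_union_Ici, hasDerivWithinAt_univ] at h

private lemma phi1 {t a y : ℝ} (h0 : 0 ≤ y) (hy : y ≤ a) (ht : 0 ≤ t) :
    min (t*(1-y)) (max (-(t*y)) ((1-t)*y - a)) = -(t*y) := by
  rw [max_eq_left (by nlinarith), min_eq_right (by nlinarith)]

private lemma phi2 {t a y : ℝ} (h1 : a ≤ y) (h2 : y ≤ a + t) :
    min (t*(1-y)) (max (-(t*y)) ((1-t)*y - a)) = (1-t)*y - a := by
  rw [max_eq_right (by nlinarith), min_eq_right (by nlinarith)]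

private lemma phi3 {t a y : ℝ} (h1 : a + t ≤ y) :
    min (t*(1-y)) (max (-(t*y)) ((1-t)*y - a)) = t*(1-y) := by
  rw [min_eq_left (le_max_of_le_right (by nlinarith))]

private lemma bump_zero {t a z : ℝ} (ht0 : 0 ≤ t) (ht1 : t ≤ 1) (ha : a = (1-t)/2)
    (hz : z ≤ 0 ∨ 1/2 ≤ z) :
    max 0 (min (t*z) (t*a - (1-t)*(z-a))) = 0 := by
  rcases hz with h | h
  · rw [max_eq_left]
    exact le_trans (min_le_left _ _) (by nlinarith [mul_nonneg ht0 (neg_nonneg.2 h)])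
  · rw [max_eq_left]
    exact le_trans (min_le_right _ _)
      (by nlinarith [mul_nonneg (by linarith : (0:ℝ) ≤ 1-t) (by linarith : (0:ℝ) ≤ z - 1/2)])

private lemma bump_term {t a y : ℝ} (ht0 : 0 < t) (ht1 : t < 1) (ha : a = (1-t)/2)
    (h0 : 0 ≤ y) (h1 : y ≤ 1) :
    max 0 (min (t*(1-y)) (t*a - (1-t)*((1-y)-a))) - max 0 (min (t*y) (t*a - (1-t)*(y-a)))
      = min (t*(1-y)) (max (-(t*y)) ((1-t)*y - a)) := by
  have ha0 : 0 < a := by rw [ha]; linarith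
  rcases le_or_gt y (1/2) with hy | hy
  · rw [bump_zero ht0.le ht1.le ha (Or.inr (by linarith))]
    rcases le_or_gt y a with h | h
    · rw [phi1 h0 h ht0.le,
        max_eq_right (le_min (by nlinarith [mul_nonneg ht0.le h0]) (by nlinarith [mul_nonneg ht0.le ha0.le, mul_nonneg (by linarith : (0:ℝ) ≤ 1-t) (by linarith : (0:ℝ) ≤ a - y)])),
        min_eq_left (by nlinarith)]
      ring
    · rw [phi2 h.le (by nlinarith),
        min_eq_right (by nlinarith),
        max_eq_right (by nlinarith [mul_nonneg (by linarith : (0:ℝ) ≤ 1-t) (by linarith : (0:ℝ) ≤ 1/2 - y)])]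
      ring
  · rw [bump_zero ht0.le ht1.le ha (Or.inr hy.le)]
    rcases le_or_gt (1-y) a with h | h
    · rw [phi3 (by nlinarith),
        min_eq_left (by nlinarith),
        max_eq_right (by nlinarith [mul_nonneg ht0.le (by linarith : (0:ℝ) ≤ 1-y)])]
      ring
    · rw [phi2 (by nlinarith) (by nlinarith),
        min_eq_right (by nlinarith),
        max_eq_right (by nlinarith [mul_nonneg (by linarith : (0:ℝ) ≤ 1-t) (by linarith : (0:ℝ) ≤ 1/2 - (1-y))])]
      linear_combination (2:ℝ) * ha

private lemma lipBump {t a : ℝ} (h0 : 0 ≤ t) (h1 : t ≤ 1) (z w : ℝ) :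
    |max 0 (min (t*z) (t*a - (1-t)*(z-a))) - max 0 (min (t*w) (t*a - (1-t)*(w-a)))| ≤ |z - w| := by
  refine le_trans (abs_max_sub_max_le_max _ _ _ _) (max_le (by simp [abs_nonneg]) ?_)
  refine le_trans (abs_min_sub_min_le_max _ _ _ _) (max_le ?_ ?_)
  · have h : t*z - t*w = t*(z-w) := by ring
    rw [h, abs_mul, abs_of_nonneg h0]
    nlinarith [abs_nonneg (z-w)]
  · have h : (t*a - (1-t)*(z-a)) - (t*a - (1-t)*(w-a)) = (1-t)*(w-z) := by ring
    rw [h, abs_mul, abs_of_nonneg (by linarith : (0:ℝ) ≤ 1-t), abs_sub_comm w z]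
    nlinarith [abs_nonneg (z-w)]

private lemma main_case (α β t ε : ℝ) (ht0 : 0 < t) (ht1 : t < 1) (hε : 0 < ε) :
    ∃ (I J : Set ℝ) (u u' : ℝ → ℝ) (K : NNReal) (δ₁ δ₂ : ℝ),
      IsOpen I ∧ IsOpen J ∧ I ⊆ Set.Ioo 0 1 ∧ J ⊆ Set.Ioo 0 1 ∧ Disjoint I J ∧
      closure I ∪ closure J = Set.Icc 0 1 ∧
      volume I = ENNReal.ofReal t ∧
      volume J = ENNReal.ofReal (1 - t) ∧
      (∀ x ∈ Set.Icc (0 : ℝ) 1, HasDerivWithinAt u (u' x) (Set.Icc 0 1) x) ∧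
      ContinuousOn u' (Set.Icc 0 1) ∧
      LipschitzOnWith K u' (Set.Icc 0 1) ∧
      u 0 = (1 / 2) * (t * α + (1 - t) * β) * (0 : ℝ) ^ 2 ∧
      u' 0 = (t * α + (1 - t) * β) * 0 ∧
      u 1 = (1 / 2) * (t * α + (1 - t) * β) * (1 : ℝ) ^ 2 ∧
      u' 1 = (t * α + (1 - t) * β) * 1 ∧
      (∀ x ∈ Set.Icc (0 : ℝ) 1, |u x - (1 / 2) * (t * α + (1 - t) * β) * x ^ 2| ≤ δ₁) ∧
      (∀ x ∈ Set.Icc (0 : ℝ) 1, |u' x - (t * α + (1 - t) * β) * x| ≤ δ₂) ∧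
      δ₁ + δ₂ < ε ∧
      (∀ x ∈ I, HasDerivAt u' α x) ∧
      (∀ x ∈ J, HasDerivAt u' β x) := by
  set q := t * α + (1 - t) * β with hq
  set c := α - β with hc
  set a := (1 - t) / 2 with ha
  have ha0 : 0 < a := by rw [ha]; linarith
  have haU : a ≤ 1/2 := by rw [ha]; linarith
  have hat1 : a + t < 1 := by rw [ha]; linarith
  obtain ⟨n, hn⟩ := exists_nat_gt (5 * |c| / ε)
  have hnpos : 0 < n := by
    by_contra h
    push_neg at h
    interval_cases n
    · simp at hn
      have h5 : 0 ≤ 5 * |c| / ε := by positivity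
      linarith
  set N := (n : ℝ) with hNdef
  have hN : 0 < N := by rw [hNdef]; exact_mod_cast hnpos
  have hN1 : 1 ≤ N := by rw [hNdef]; exact_mod_cast hnpos
  have hNne : N ≠ 0 := ne_of_gt hN
  -- interval membership helper
  have hd1 : ∀ p x : ℝ, p/N < x ↔ p < N*x := by intro p x; rw [div_lt_iff₀ hN, mul_comm]
  have hd2 : ∀ p x : ℝ, x < p/N ↔ N*x < p := by intro p x; rw [lt_div_iff₀ hN, mul_comm]
  have hd3 : ∀ p x : ℝ, p/N ≤ x ↔ p ≤ N*x := by intro p x; rw [div_le_iff₀ hN, mul_comm]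
  have hd4 : ∀ p x : ℝ, x ≤ p/N ↔ N*x ≤ p := by intro p x; rw [le_div_iff₀ hN, mul_comm]
  have hmem : ∀ p r x : ℝ, x ∈ Ioo (p/N) (r/N) ↔ (p < N*x ∧ N*x < r) := by
    intro p r x; rw [mem_Ioo, hd1, hd2]
  have hmemc : ∀ p r x : ℝ, x ∈ Icc (p/N) (r/N) ↔ (p ≤ N*x ∧ N*x ≤ r) := by
    intro p r x; rw [mem_Icc, hd3, hd4]
  -- fract helper
  have hfrZ : ∀ (m : ℤ) (w : ℝ), (m:ℝ) ≤ w → w < (m:ℝ)+1 → Int.fract w = w - m := by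
    intro m w h1 h2
    have hfl : ⌊w⌋ = m := Int.floor_eq_iff.mpr ⟨h1, by push_cast; linarith⟩
    rw [← Int.self_sub_floor, hfl]
  have hfloor : ∀ x : ℝ, 0 ≤ x → x < 1 → ∃ m : ℕ, m < n ∧ (m:ℝ) ≤ N*x ∧ N*x < (m:ℝ)+1 := by
    intro x h0 h1
    have hxn : 0 ≤ N*x := by positivity
    have hnn : 0 ≤ ⌊N*x⌋ := Int.floor_nonneg.mpr hxn
    refine ⟨⌊N*x⌋.toNat, ?_, ?_, ?_⟩
    · have hlt : ⌊N*x⌋ < (n:ℤ) := Int.floor_lt.mpr (by push_cast; nlinarith)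
      omega
    · rw [show ((⌊N*x⌋.toNat : ℕ):ℝ) = ((⌊N*x⌋:ℤ):ℝ) by exact_mod_cast Int.toNat_of_nonneg hnn]
      exact Int.floor_le _
    · rw [show ((⌊N*x⌋.toNat : ℕ):ℝ) = ((⌊N*x⌋:ℤ):ℝ) by exact_mod_cast Int.toNat_of_nonneg hnn]
      exact Int.lt_floor_add_one _
  -- the sets
  set I : Set ℝ := ⋃ k ∈ Finset.range n, Ioo (((k:ℝ)+a)/N) (((k:ℝ)+a+t)/N) with hI
  set J : Set ℝ := ⋃ k ∈ Finset.range n,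
      (Ioo ((k:ℝ)/N) (((k:ℝ)+a)/N) ∪ Ioo (((k:ℝ)+a+t)/N) (((k:ℝ)+1)/N)) with hJ
  -- the functions
  set u : ℝ → ℝ := fun x => q*x^2/2 + (c/N^2) *
      (if Int.fract (N*x) ≤ a then (-t/2)*(Int.fract (N*x))^2 + 0*(Int.fract (N*x)) + 0
       else if Int.fract (N*x) ≤ a+t then
         ((1-t)/2)*(Int.fract (N*x))^2 + (-a)*(Int.fract (N*x)) + a^2/2
       else (-t/2)*(Int.fract (N*x))^2 + t*(Int.fract (N*x)) +
         (t*(1-a)^2/2 - t*(1-a) - t*a^2/2)) with hu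
  set u' : ℝ → ℝ := fun x => q*x + (c/N) *
      (min (t*(1-Int.fract (N*x))) (max (-(t*Int.fract (N*x))) ((1-t)*Int.fract (N*x) - a)))
      with hu'

  have hcast1 : ∀ k : ℕ, k ∈ Finset.range n → ((k:ℝ)+1 ≤ N) := by
    intro k hk
    rw [Finset.mem_range] at hk
    rw [hNdef]
    exact_mod_cast hk
  have hIopen : IsOpen I := isOpen_biUnion (fun k _ => isOpen_Ioo)
  have hJopen : IsOpen J := isOpen_biUnion (fun k _ => (isOpen_Ioo.union isOpen_Ioo))
  have hIsub : I ⊆ Ioo 0 1 := by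
    rw [hI]; intro x hx
    simp only [mem_iUnion, exists_prop] at hx
    obtain ⟨k, hk, hx⟩ := hx
    rw [hmem] at hx
    have hk1 := hcast1 k hk
    have hk0 : (0:ℝ) ≤ (k:ℝ) := Nat.cast_nonneg k
    have h0x : (0:ℝ)/N < x := (hd1 0 x).mpr (by linarith [hx.1])
    have h1x : x < N/N := (hd2 N x).mpr (by linarith [hx.2])
    rw [div_self hNne] at h1x
    rw [zero_div] at h0x
    exact ⟨h0x, h1x⟩
  have hJsub : J ⊆ Ioo 0 1 := by
    rw [hJ]; intro x hx
    simp only [mem_iUnion, exists_prop, mem_union] at hx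
    obtain ⟨k, hk, hx⟩ := hx
    have hk1 := hcast1 k hk
    have hk0 : (0:ℝ) ≤ (k:ℝ) := Nat.cast_nonneg k
    rcases hx with hx | hx <;> rw [hmem] at hx
    · have h0x : (0:ℝ)/N < x := (hd1 0 x).mpr (by linarith [hx.1])
      have h1x : x < N/N := (hd2 N x).mpr (by linarith [hx.2])
      rw [div_self hNne] at h1x
      rw [zero_div] at h0x
      exact ⟨h0x, h1x⟩
    · have h0x : (0:ℝ)/N < x := (hd1 0 x).mpr (by linarith [hx.1])
      have h1x : x < N/N := (hd2 N x).mpr (by linarith [hx.2])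
      rw [div_self hNne] at h1x
      rw [zero_div] at h0x
      exact ⟨h0x, h1x⟩
  have hdisj : Disjoint I J := by
    rw [Set.disjoint_left]
    intro x hxI hxJ
    rw [hI] at hxI
    rw [hJ] at hxJ
    simp only [mem_iUnion, exists_prop, mem_union] at hxI hxJ
    obtain ⟨k, hk, hkx⟩ := hxI
    obtain ⟨k', hk', hkx'⟩ := hxJ
    rw [hmem] at hkx
    rcases lt_trichotomy k k' with hkk | hkk | hkk
    · have hcc : (k:ℝ)+1 ≤ (k':ℝ) := by exact_mod_cast hkk
      rcases hkx' with h' | h' <;> rw [hmem] at h' <;>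
        linarith [hkx.1, hkx.2, h'.1, h'.2]
    · subst hkk
      rcases hkx' with h' | h' <;> rw [hmem] at h' <;>
        linarith [hkx.1, hkx.2, h'.1, h'.2]
    · have hcc : (k':ℝ)+1 ≤ (k:ℝ) := by exact_mod_cast hkk
      rcases hkx' with h' | h' <;> rw [hmem] at h' <;>
        linarith [hkx.1, hkx.2, h'.1, h'.2]
  have hclose : closure I ∪ closure J = Icc 0 1 := by
    have hclI : closure I = ⋃ k ∈ Finset.range n, Icc (((k:ℝ)+a)/N) (((k:ℝ)+a+t)/N) := by
      rw [hI, Finset.closure_biUnion]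
      refine iUnion₂_congr fun k hk => ?_
      exact closure_Ioo (ne_of_lt (by rw [div_lt_div_iff₀ hN hN]; nlinarith))
    have hclJ : closure J = ⋃ k ∈ Finset.range n,
        (Icc ((k:ℝ)/N) (((k:ℝ)+a)/N) ∪ Icc (((k:ℝ)+a+t)/N) (((k:ℝ)+1)/N)) := by
      rw [hJ, Finset.closure_biUnion]
      refine iUnion₂_congr fun k hk => ?_
      rw [closure_union,
        closure_Ioo (ne_of_lt (by rw [div_lt_div_iff₀ hN hN]; nlinarith)),
        closure_Ioo (ne_of_lt (by rw [div_lt_div_iff₀ hN hN]; nlinarith))]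
    rw [hclI, hclJ]
    apply Subset.antisymm
    · rintro x (hx | hx) <;> simp only [mem_iUnion, exists_prop, mem_union] at hx
      · obtain ⟨k, hk, hx⟩ := hx
        rw [hmemc] at hx
        have hk1 := hcast1 k hk
        have hk0 : (0:ℝ) ≤ (k:ℝ) := Nat.cast_nonneg k
        have h0x : (0:ℝ)/N ≤ x := (hd3 0 x).mpr (by linarith [hx.1])
        have h1x : x ≤ N/N := (hd4 N x).mpr (by linarith [hx.2])
        rw [div_self hNne] at h1x
        rw [zero_div] at h0x
        exact ⟨h0x, h1x⟩
      · obtain ⟨k, hk, hx⟩ := hx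
        have hk1 := hcast1 k hk
        have hk0 : (0:ℝ) ≤ (k:ℝ) := Nat.cast_nonneg k
        rcases hx with hx | hx <;> rw [hmemc] at hx
        · have h0x : (0:ℝ)/N ≤ x := (hd3 0 x).mpr (by linarith [hx.1])
          have h1x : x ≤ N/N := (hd4 N x).mpr (by linarith [hx.2])
          rw [div_self hNne] at h1x
          rw [zero_div] at h0x
          exact ⟨h0x, h1x⟩
        · have h0x : (0:ℝ)/N ≤ x := (hd3 0 x).mpr (by linarith [hx.1])
          have h1x : x ≤ N/N := (hd4 N x).mpr (by linarith [hx.2])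
          rw [div_self hNne] at h1x
          rw [zero_div] at h0x
          exact ⟨h0x, h1x⟩
    · intro x hx
      rcases eq_or_lt_of_le hx.2 with h1 | h1
      · right
        simp only [mem_iUnion, exists_prop, mem_union]
        refine ⟨n-1, Finset.mem_range.mpr (by omega), Or.inr ?_⟩
        have hcast : ((n-1 : ℕ):ℝ) = N-1 := by
          rw [hNdef, Nat.cast_sub hnpos]; push_cast; ring
        rw [hmemc, hcast, h1, mul_one]
        constructor <;> linarith
      · obtain ⟨m, hmn, hm0, hm1⟩ := hfloor x hx.1 h1
        rcases le_or_gt (N*x - m) a with hys | hys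
        · right
          simp only [mem_iUnion, exists_prop, mem_union]
          exact ⟨m, Finset.mem_range.mpr hmn,
            Or.inl (by rw [hmemc]; constructor <;> linarith)⟩
        · rcases le_or_gt (N*x - m) (a+t) with hys2 | hys2
          · left
            simp only [mem_iUnion, exists_prop]
            exact ⟨m, Finset.mem_range.mpr hmn,
              by rw [hmemc]; constructor <;> linarith⟩
          · right
            simp only [mem_iUnion, exists_prop, mem_union]
            exact ⟨m, Finset.mem_range.mpr hmn,
              Or.inr (by rw [hmemc]; constructor <;> linarith)⟩
  have hIpd : Set.PairwiseDisjoint (↑(Finset.range n) : Set ℕ)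
      (fun k : ℕ => Ioo (((k:ℝ)+a)/N) (((k:ℝ)+a+t)/N)) := by
    intro k hk k' hk' hkk
    simp only [Function.onFun]
    rw [Set.disjoint_left]
    intro x h1 h2
    rw [hmem] at h1 h2
    rcases hkk.lt_or_gt with h | h
    · have hcc : (k:ℝ)+1 ≤ (k':ℝ) := by exact_mod_cast h
      linarith [h1.1, h1.2, h2.1, h2.2]
    · have hcc : (k':ℝ)+1 ≤ (k:ℝ) := by exact_mod_cast h
      linarith [h1.1, h1.2, h2.1, h2.2]
  have hJpd : Set.PairwiseDisjoint (↑(Finset.range n) : Set ℕ)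
      (fun k : ℕ => Ioo ((k:ℝ)/N) (((k:ℝ)+a)/N) ∪ Ioo (((k:ℝ)+a+t)/N) (((k:ℝ)+1)/N)) := by
    intro k hk k' hk' hkk
    simp only [Function.onFun]
    rw [Set.disjoint_left]
    intro x h1 h2
    simp only [mem_union] at h1 h2
    rcases hkk.lt_or_gt with h | h
    · have hcc : (k:ℝ)+1 ≤ (k':ℝ) := by exact_mod_cast h
      rcases h1 with h1 | h1 <;> rcases h2 with h2 | h2 <;> rw [hmem] at h1 h2 <;>
        linarith [h1.1, h1.2, h2.1, h2.2]
    · have hcc : (k':ℝ)+1 ≤ (k:ℝ) := by exact_mod_cast h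
      rcases h1 with h1 | h1 <;> rcases h2 with h2 | h2 <;> rw [hmem] at h1 h2 <;>
        linarith [h1.1, h1.2, h2.1, h2.2]
  have hIvol : volume I = ENNReal.ofReal t := by
    rw [hI, measure_biUnion_finset hIpd (fun k _ => measurableSet_Ioo)]
    have heach : ∀ k ∈ Finset.range n,
        volume (Ioo (((k:ℝ)+a)/N) (((k:ℝ)+a+t)/N)) = ENNReal.ofReal (t/N) := by
      intro k _
      rw [Real.volume_Ioo]
      congr 1
      rw [div_sub_div_same]
      congr 1
      ring
    rw [Finset.sum_congr rfl heach, Finset.sum_const, Finset.card_range, nsmul_eq_mul,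
      show ((n:ℝ≥0∞)) = ENNReal.ofReal N by rw [hNdef, ENNReal.ofReal_natCast],
      ← ENNReal.ofReal_mul hN.le]
    congr 1
    field_simp
  have hJvol : volume J = ENNReal.ofReal (1-t) := by
    rw [hJ, measure_biUnion_finset hJpd
      (fun k _ => (measurableSet_Ioo.union measurableSet_Ioo))]
    have heach : ∀ k ∈ Finset.range n,
        volume (Ioo ((k:ℝ)/N) (((k:ℝ)+a)/N) ∪ Ioo (((k:ℝ)+a+t)/N) (((k:ℝ)+1)/N))
          = ENNReal.ofReal ((1-t)/N) := by
      intro k _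
      have hdisj2 : Disjoint (Ioo ((k:ℝ)/N) (((k:ℝ)+a)/N))
          (Ioo (((k:ℝ)+a+t)/N) (((k:ℝ)+1)/N)) := by
        rw [Set.disjoint_left]
        intro x h1 h2
        rw [hmem] at h1 h2
        linarith [h1.2, h2.1]
      rw [measure_union hdisj2 measurableSet_Ioo, Real.volume_Ioo, Real.volume_Ioo,
        show ((k:ℝ)+a)/N - (k:ℝ)/N = a/N by rw [div_sub_div_same]; congr 1; ring,
        show ((k:ℝ)+1)/N - ((k:ℝ)+a+t)/N = (1-(a+t))/N by rw [div_sub_div_same]; congr 1; ring,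
        ← ENNReal.ofReal_add (by positivity) (div_nonneg (by linarith) hN.le)]
      congr 1
      rw [← add_div]
      congr 1
      ring
    rw [Finset.sum_congr rfl heach, Finset.sum_const, Finset.card_range, nsmul_eq_mul,
      show ((n:ℝ≥0∞)) = ENNReal.ofReal N by rw [hNdef, ENNReal.ofReal_natCast],
      ← ENNReal.ofReal_mul hN.le]
    congr 1
    field_simp
  -- globally Lipschitz representation via bumps
  set B : ℝ → ℝ := fun w => max 0 (min (t*w) (t*a - (1-t)*(w-a))) with hB
  set Z : ℝ → ℝ := fun x => ∑ k ∈ Finset.range n,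
      (B (1-(N*x-(k:ℝ))) - B (N*x-(k:ℝ))) with hZ
  have hvan1 : ∀ w : ℝ, 1 ≤ w → B (1-w) - B w = 0 := by
    intro w hw
    simp only [hB]
    rw [bump_zero ht0.le ht1.le ha (Or.inl (by linarith)),
      bump_zero ht0.le ht1.le ha (Or.inr (by linarith))]
    ring
  have hvan2 : ∀ w : ℝ, w ≤ 0 → B (1-w) - B w = 0 := by
    intro w hw
    simp only [hB]
    rw [bump_zero ht0.le ht1.le ha (Or.inr (by linarith)),
      bump_zero ht0.le ht1.le ha (Or.inl hw)]
    ring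
  have hterm : ∀ y : ℝ, 0 ≤ y → y ≤ 1 →
      B (1-y) - B y = min (t*(1-y)) (max (-(t*y)) ((1-t)*y - a)) := by
    intro y h0 h1
    simp only [hB]
    exact bump_term ht0 ht1 ha h0 h1
  have hfract : ∀ (m : ℕ) (w : ℝ), (m:ℝ) ≤ w → w < (m:ℝ)+1 → Int.fract w = w - (m:ℝ) := by
    intro m w h1 h2
    have h := hfrZ (m:ℤ) w (by push_cast; exact h1) (by push_cast; exact h2)
    rwa [show (((m:ℤ)):ℝ) = (m:ℝ) by push_cast; ring] at h
  have hbridge : ∀ x ∈ Icc (0:ℝ) 1, u' x = q*x + (c/N) * Z x := by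
    intro x hx
    rcases eq_or_lt_of_le hx.2 with h1 | h1
    · subst h1
      simp only [hu', hZ]
      congr 1
      congr 1
      have hfN : Int.fract (N*1) = 0 := by rw [mul_one, hNdef]; exact Int.fract_natCast n
      rw [hfN, phi1 le_rfl ha0.le ht0.le,
        Finset.sum_eq_zero (fun k hk => hvan1 _ (by linarith [hcast1 k hk]))]
      ring
    · obtain ⟨m, hmn, hm0, hm1⟩ := hfloor x hx.1 h1
      simp only [hu', hZ]
      congr 1
      congr 1
      rw [hfract m (N*x) hm0 hm1,
        Finset.sum_eq_single_of_mem m (Finset.mem_range.mpr hmn) ?_,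
        hterm _ (by linarith) (by linarith)]
      intro k hk hkm
      rcases lt_or_gt_of_ne hkm with h | h
      · have hcc : (k:ℝ)+1 ≤ (m:ℝ) := by exact_mod_cast h
        exact hvan1 _ (by linarith)
      · have hcc : (m:ℝ)+1 ≤ (k:ℝ) := by exact_mod_cast h
        exact hvan2 _ (by linarith)
  have hulip : LipschitzOnWith (Real.toNNReal (|q| + 2*|c| * N)) u' (Icc 0 1) := by
    rw [lipschitzOnWith_iff_dist_le_mul]
    intro x hx y hy
    rw [Real.dist_eq, Real.dist_eq, hbridge x hx, hbridge y hy,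
      Real.coe_toNNReal _ (by positivity)]
    have hZd : |Z x - Z y| ≤ N * (2 * (N * |x - y|)) := by
      simp only [hZ]
      rw [← Finset.sum_sub_distrib]
      refine le_trans (Finset.abs_sum_le_sum_abs _ _) (le_trans (Finset.sum_le_sum
        (g := fun _ : ℕ => 2 * (N * |x - y|)) ?_) ?_)
      · intro k _
        have e1 : (B (1-(N*x-(k:ℝ))) - B (N*x-(k:ℝ))) - (B (1-(N*y-(k:ℝ))) - B (N*y-(k:ℝ)))
            = (B (1-(N*x-(k:ℝ))) - B (1-(N*y-(k:ℝ)))) - (B (N*x-(k:ℝ)) - B (N*y-(k:ℝ))) := by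
          ring
        rw [e1]
        have habs : ∀ A C : ℝ, |A - C| ≤ |A| + |C| := by
          intro A C
          rw [sub_eq_add_neg]
          exact le_trans (abs_add_le _ _) (by rw [abs_neg])
        refine le_trans (habs _ _) ?_
        have l1 : |B (1-(N*x-(k:ℝ))) - B (1-(N*y-(k:ℝ)))|
            ≤ |(1-(N*x-(k:ℝ))) - (1-(N*y-(k:ℝ)))| := by
          simp only [hB]; exact lipBump ht0.le ht1.le _ _
        have l2 : |B (N*x-(k:ℝ)) - B (N*y-(k:ℝ))| ≤ |(N*x-(k:ℝ)) - (N*y-(k:ℝ))| := by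
          simp only [hB]; exact lipBump ht0.le ht1.le _ _
        rw [show (1-(N*x-(k:ℝ))) - (1-(N*y-(k:ℝ))) = -(N*(x-y)) by ring, abs_neg, abs_mul,
          abs_of_pos hN] at l1
        rw [show (N*x-(k:ℝ)) - (N*y-(k:ℝ)) = N*(x-y) by ring, abs_mul, abs_of_pos hN] at l2
        refine le_trans (add_le_add l1 l2) ?_
        show N * |x - y| + N * |x - y| ≤ 2 * (N * |x - y|)
        linarith
      · rw [Finset.sum_const, Finset.card_range, nsmul_eq_mul, ← hNdef]
    have e : (q*x + (c/N) * Z x) - (q*y + (c/N) * Z y)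
        = q*(x-y) + (c/N)*(Z x - Z y) := by ring
    rw [e]
    calc |q*(x-y) + (c/N)*(Z x - Z y)| ≤ |q*(x-y)| + |(c/N)*(Z x - Z y)| := abs_add_le _ _
      _ = |q| *|x-y| + (|c|/N)*|Z x - Z y| := by
          rw [abs_mul, abs_mul, abs_div, abs_of_pos hN]
      _ ≤ |q| *|x-y| + (|c|/N)*(N * (2 * (N * |x - y|))) := by gcongr
      _ = (|q| + 2*|c| * N)*|x-y| := by field_simp
  have hubd' : ∀ x ∈ Icc (0:ℝ) 1, |u' x - q*x| ≤ |c|/N := by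
    intro x hx
    have h0 : 0 ≤ Int.fract (N*x) := Int.fract_nonneg _
    have h1 : Int.fract (N*x) ≤ 1 := (Int.fract_lt_one _).le
    simp only [hu']
    rw [add_sub_cancel_left, abs_mul, abs_div, abs_of_pos hN]
    have hφbd : |min (t*(1-Int.fract (N*x)))
        (max (-(t*Int.fract (N*x))) ((1-t)*Int.fract (N*x) - a))| ≤ 1 := by
      rw [abs_le]
      constructor
      · refine le_min (by nlinarith) (le_max_of_le_left (by nlinarith))
      · exact le_trans (min_le_left _ _) (by nlinarith)
    refine le_trans (mul_le_mul_of_nonneg_left hφbd (by positivity : (0:ℝ) ≤ |c|/N)) ?_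
    rw [mul_one]
  have hubd : ∀ x ∈ Icc (0:ℝ) 1, |u x - q*x^2/2| ≤ 4*|c|/N^2 := by
    intro x hx
    have h0 : 0 ≤ Int.fract (N*x) := Int.fract_nonneg _
    have h1 : Int.fract (N*x) ≤ 1 := (Int.fract_lt_one _).le
    simp only [hu]
    rw [add_sub_cancel_left, abs_mul, abs_div, abs_of_pos (pow_pos hN 2)]
    have hΦbd : |(if Int.fract (N*x) ≤ a then (-t/2)*(Int.fract (N*x))^2 + 0*(Int.fract (N*x)) + 0
       else if Int.fract (N*x) ≤ a+t then
         ((1-t)/2)*(Int.fract (N*x))^2 + (-a)*(Int.fract (N*x)) + a^2/2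
       else (-t/2)*(Int.fract (N*x))^2 + t*(Int.fract (N*x)) +
         (t*(1-a)^2/2 - t*(1-a) - t*a^2/2))| ≤ 4 := by
      split_ifs with hc1 hc2 <;> rw [abs_le] <;> constructor <;>
        nlinarith [sq_nonneg (Int.fract (N*x)), sq_nonneg (Int.fract (N*x) - a),
          sq_nonneg (1 - Int.fract (N*x)), sq_nonneg a, sq_nonneg (1-a)]
    refine le_trans (mul_le_mul_of_nonneg_left hΦbd (by positivity : (0:ℝ) ≤ |c|/N^2)) ?_
    rw [show |c|/N^2 * 4 = 4*|c|/N^2 by ring]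
  have hδsum : 4*|c|/N^2 + |c|/N < ε := by
    have h2 : 4*|c|/N^2 ≤ 4*|c|/N := by
      rw [div_le_div_iff₀ (pow_pos hN 2) hN]
      nlinarith [mul_nonneg (mul_nonneg (abs_nonneg c) hN.le) (sub_nonneg.mpr hN1)]
    have h3 : 5*|c|/N < ε := by
      rw [div_lt_iff₀ hN]
      have h := (div_lt_iff₀ hε).mp hn
      nlinarith
    have h4 : 4*|c|/N + |c|/N = 5*|c|/N := by ring
    linarith
  -- local quadratic derivative helper
  have hquad : ∀ A B2 C m x : ℝ, HasDerivAt
      (fun z => q*z^2/2 + (c/N^2) * (A*(N*z-m)^2 + B2*(N*z-m) + C))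
      (q*x + (c/N)*(2*A*(N*x-m) + B2)) x := by
    intro A B2 C m x
    have h := quadDeriv (q/2 + A*c) (B2*c/N - 2*A*c*m/N) (A*c*m^2/N^2 - B2*c*m/N^2 + C*c/N^2) x
    have hfun : (fun z : ℝ => (q/2 + A*c)*z^2 + (B2*c/N - 2*A*c*m/N)*z
        + (A*c*m^2/N^2 - B2*c*m/N^2 + C*c/N^2))
        = (fun z => q*z^2/2 + (c/N^2) * (A*(N*z-m)^2 + B2*(N*z-m) + C)) := by
      funext z
      field_simp
      ring
    rw [hfun] at h
    convert h using 1
    field_simp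
    ring
  have hC3 : (0:ℝ) = (-t/2)*(1:ℝ)^2 + t*1 + (t*(1-a)^2/2 - t*(1-a) - t*a^2/2) := by ring
  have hderiv : ∀ x ∈ Icc (0:ℝ) 1, HasDerivWithinAt u (u' x) (Icc 0 1) x := by
    intro x hx
    rcases eq_or_lt_of_le hx.1 with h0 | h0
    · -- x = 0
      subst h0
      have hf0 : Int.fract (N*0) = 0 := by rw [mul_zero, Int.fract_zero]
      have hval : u' 0 = q*0 + (c/N)*(2*(-t/2)*(N*0-0) + 0) := by
        simp only [hu']
        rw [hf0, phi1 le_rfl ha0.le ht0.le]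
        ring
      have hlo : (0:ℝ) < (a/2)/N := div_pos (by linarith) hN
      have heq : ∀ z ∈ Icc (0:ℝ) ((a/2)/N),
          u z = q*z^2/2 + (c/N^2) * ((-t/2)*(N*z-0)^2 + 0*(N*z-0) + 0) := by
        intro z hz
        have hz2 : N*z ≤ a/2 := by
          have := hz.2
          rw [hd4] at this
          exact this
        have hz1 : 0 ≤ N*z := by
          have := mul_le_mul_of_nonneg_left hz.1 hN.le
          linarith
        have hfz : Int.fract (N*z) = N*z - (0:ℕ) := hfract 0 _ (by push_cast; linarith)
          (by push_cast; linarith)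
        simp only [hu]
        rw [hfz]
        push_cast
        rw [if_pos (by linarith)]
      have key := ((hquad (-t/2) 0 0 0 0).hasDerivWithinAt (s := Icc (0:ℝ) ((a/2)/N))).congr
        heq (heq 0 ⟨le_rfl, hlo.le⟩)
      rw [← hval] at key
      refine key.mono_of_mem_nhdsWithin (Filter.mem_of_superset
        (inter_mem_nhdsWithin (Icc 0 1) (Iio_mem_nhds hlo)) ?_)
      rintro z ⟨hz1, hz2⟩
      exact ⟨hz1.1, le_of_lt hz2⟩
    rcases eq_or_lt_of_le hx.2 with h1 | h1
    · -- x = 1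
      subst h1
      have hf1 : Int.fract (N*1) = 0 := by rw [mul_one, hNdef]; exact Int.fract_natCast n
      have hval : u' 1 = q*1 + (c/N)*(2*(-t/2)*(N*1-(N-1)) + t) := by
        simp only [hu']
        rw [hf1, phi1 le_rfl ha0.le ht0.le]
        ring
      have hlo1 : (N-1+(a+t+1)/2)/N < 1 := by
        rw [div_lt_iff₀ hN]
        linarith
      have heq : ∀ z ∈ Icc ((N-1+(a+t+1)/2)/N) 1,
          u z = q*z^2/2 + (c/N^2) * ((-t/2)*(N*z-(N-1))^2 + t*(N*z-(N-1))
            + (t*(1-a)^2/2 - t*(1-a) - t*a^2/2)) := by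
        intro z hz
        rcases eq_or_lt_of_le hz.2 with hz1 | hz1
        · subst hz1
          simp only [hu]
          rw [hf1, if_pos ha0.le]
          ring
        · have hzl : N-1+(a+t+1)/2 ≤ N*z := by
            have := hz.1
            rw [hd3] at this
            exact this
          have hzr : N*z < N := by nlinarith
          have hfz : Int.fract (N*z) = N*z - (N-1) := by
            have h := hfrZ ((n:ℤ)-1) (N*z) (by push_cast; rw [← hNdef]; linarith)
              (by push_cast; rw [← hNdef]; linarith)
            rwa [show ((((n:ℤ)-1 : ℤ)):ℝ) = N-1 by push_cast; rw [← hNdef]] at h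
          simp only [hu]
          rw [hfz, if_neg (not_le.mpr (by linarith)), if_neg (not_le.mpr (by linarith))]
      have key := ((hquad (-t/2) t (t*(1-a)^2/2 - t*(1-a) - t*a^2/2) (N-1) 1).hasDerivWithinAt
        (s := Icc ((N-1+(a+t+1)/2)/N) 1)).congr heq (heq 1 ⟨hlo1.le, le_rfl⟩)
      rw [← hval] at key
      refine key.mono_of_mem_nhdsWithin (Filter.mem_of_superset
        (inter_mem_nhdsWithin (Icc 0 1) (Ioi_mem_nhds hlo1)) ?_)
      rintro z ⟨hz1, hz2⟩
      exact ⟨le_of_lt hz2, hz1.2⟩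
    · -- interior
      obtain ⟨m, hmn, hm0, hm1⟩ := hfloor x h0.le h1
      have hfx : Int.fract (N*x) = N*x - m := hfract m _ hm0 hm1
      rcases eq_or_lt_of_le hm0 with hy0 | hy0
      · -- N*x = m (seam at a period boundary), m ≥ 1
        have hm1' : (1:ℝ) ≤ (m:ℝ) := by
          have hmpos : 0 < m := by
            by_contra hcon
            push_neg at hcon
            interval_cases m
            · simp at hy0
              rcases hy0 with h | h
              · exact hNne h
              · exact absurd h (ne_of_gt h0)
          exact_mod_cast hmpos
        have hlt1 : ((m:ℝ)-1+(a+t+1)/2)/N < x := by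
          rw [hd1]
          linarith
        have hlt2 : x < ((m:ℝ)+a/2)/N := by
          rw [hd2]
          linarith
        have hvalL : u' x = q*x + (c/N)*(2*(-t/2)*(N*x-((m:ℝ)-1)) + t) := by
          simp only [hu']
          rw [hfx, ← hy0, sub_self, phi1 le_rfl ha0.le ht0.le]
          ring
        have hvalR : u' x = q*x + (c/N)*(2*(-t/2)*(N*x-(m:ℝ)) + 0) := by
          simp only [hu']
          rw [hfx, ← hy0, sub_self, phi1 le_rfl ha0.le ht0.le]
          ring
        have heqL : ∀ z ∈ Icc (((m:ℝ)-1+(a+t+1)/2)/N) x,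
            u z = q*z^2/2 + (c/N^2) * ((-t/2)*(N*z-((m:ℝ)-1))^2 + t*(N*z-((m:ℝ)-1))
              + (t*(1-a)^2/2 - t*(1-a) - t*a^2/2)) := by
          intro z hz
          have hzl : (m:ℝ)-1+(a+t+1)/2 ≤ N*z := by
            have := hz.1
            rw [hd3] at this
            exact this
          have hzr : N*z ≤ (m:ℝ) := by
            have := mul_le_mul_of_nonneg_left hz.2 hN.le
            linarith [hy0]
          rcases eq_or_lt_of_le hzr with hze | hze
          · have hfz : Int.fract (N*z) = 0 := by rw [hze]; exact Int.fract_natCast m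
            simp only [hu]
            rw [hfz, if_pos ha0.le, hze]
            ring
          · have hfz : Int.fract (N*z) = N*z - ((m:ℝ)-1) := by
              have h := hfrZ ((m:ℤ)-1) (N*z) (by push_cast; linarith) (by push_cast; linarith)
              rwa [show ((((m:ℤ)-1 : ℤ)):ℝ) = (m:ℝ)-1 by push_cast; ring] at h
            simp only [hu]
            rw [hfz, if_neg (not_le.mpr (by linarith)), if_neg (not_le.mpr (by linarith))]
        have heqR : ∀ z ∈ Icc x (((m:ℝ)+a/2)/N),
            u z = q*z^2/2 + (c/N^2) * ((-t/2)*(N*z-(m:ℝ))^2 + 0*(N*z-(m:ℝ)) + 0) := by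
          intro z hz
          have hzl : (m:ℝ) ≤ N*z := by
            have := mul_le_mul_of_nonneg_left hz.1 hN.le
            linarith [hy0]
          have hzr : N*z ≤ (m:ℝ)+a/2 := by
            have := hz.2
            rw [hd4] at this
            exact this
          have hfz : Int.fract (N*z) = N*z - m := hfract m _ hzl (by linarith)
          simp only [hu]
          rw [hfz, if_pos (by linarith)]
        have hdl : HasDerivAt (fun z => q*z^2/2 + (c/N^2) * ((-t/2)*(N*z-((m:ℝ)-1))^2
            + t*(N*z-((m:ℝ)-1)) + (t*(1-a)^2/2 - t*(1-a) - t*a^2/2))) (u' x) x := by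
          rw [hvalL]
          exact hquad _ _ _ _ _
        have hdr : HasDerivAt (fun z => q*z^2/2 + (c/N^2) * ((-t/2)*(N*z-(m:ℝ))^2
            + 0*(N*z-(m:ℝ)) + 0)) (u' x) x := by
          rw [hvalR]
          exact hquad _ _ _ _ _
        exact (glueDeriv hlt1 hlt2 heqL heqR hdl hdr).hasDerivWithinAt
      · rcases lt_trichotomy (N*x - m) a with hya | hya | hya
        · -- pure branch 1
          have hxm : x ∈ Ioo ((m:ℝ)/N) (((m:ℝ)+a)/N) := by
            rw [hmem]
            exact ⟨hy0, by linarith⟩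
          have heq : ∀ z ∈ Ioo ((m:ℝ)/N) (((m:ℝ)+a)/N),
              u z = q*z^2/2 + (c/N^2) * ((-t/2)*(N*z-(m:ℝ))^2 + 0*(N*z-(m:ℝ)) + 0) := by
            intro z hz
            rw [hmem] at hz
            have hfz : Int.fract (N*z) = N*z - m := hfract m _ hz.1.le (by linarith [hz.2])
            simp only [hu]
            rw [hfz, if_pos (by linarith [hz.2])]
          have hval : u' x = q*x + (c/N)*(2*(-t/2)*(N*x-(m:ℝ)) + 0) := by
            simp only [hu']
            rw [hfx, phi1 (by linarith) hya.le ht0.le]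
            ring
          have hd := (hquad (-t/2) 0 0 (m:ℝ) x).congr_of_eventuallyEq
            (Filter.eventuallyEq_of_mem (isOpen_Ioo.mem_nhds hxm) heq)
          rw [hval]
          exact hd.hasDerivWithinAt
        · -- seam y = a
          have hlt1 : ((m:ℝ)+a/2)/N < x := by
            rw [hd1]
            linarith
          have hlt2 : x < ((m:ℝ)+a+t/2)/N := by
            rw [hd2]
            linarith
          have hvalL : u' x = q*x + (c/N)*(2*(-t/2)*(N*x-(m:ℝ)) + 0) := by
            simp only [hu']
            rw [hfx, phi1 (by linarith) (by linarith) ht0.le]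
            ring
          have hvalR : u' x = q*x + (c/N)*(2*((1-t)/2)*(N*x-(m:ℝ)) + (-a)) := by
            simp only [hu']
            rw [hfx, phi2 (by linarith) (by linarith)]
            ring
          have heqL : ∀ z ∈ Icc (((m:ℝ)+a/2)/N) x,
              u z = q*z^2/2 + (c/N^2) * ((-t/2)*(N*z-(m:ℝ))^2 + 0*(N*z-(m:ℝ)) + 0) := by
            intro z hz
            have hzl : (m:ℝ)+a/2 ≤ N*z := by
              have := hz.1
              rw [hd3] at this
              exact this
            have hzr : N*z ≤ N*x := mul_le_mul_of_nonneg_left hz.2 hN.le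
            have hfz : Int.fract (N*z) = N*z - m := hfract m _ (by linarith) (by linarith)
            simp only [hu]
            rw [hfz, if_pos (by linarith)]
          have heqR : ∀ z ∈ Icc x (((m:ℝ)+a+t/2)/N),
              u z = q*z^2/2 + (c/N^2) * (((1-t)/2)*(N*z-(m:ℝ))^2 + (-a)*(N*z-(m:ℝ)) + a^2/2) := by
            intro z hz
            have hzl : N*x ≤ N*z := mul_le_mul_of_nonneg_left hz.1 hN.le
            have hzr : N*z ≤ (m:ℝ)+a+t/2 := by
              have := hz.2
              rw [hd4] at this
              exact this
            have hfz : Int.fract (N*z) = N*z - m := hfract m _ (by linarith) (by linarith)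
            simp only [hu]
            rw [hfz]
            rcases eq_or_lt_of_le (by linarith : a ≤ N*z - (m:ℝ)) with hze | hze
            · rw [if_pos hze.symm.le, ← hze]
              ring
            · rw [if_neg (not_le.mpr hze), if_pos (by linarith)]
          have hdl : HasDerivAt (fun z => q*z^2/2 + (c/N^2) * ((-t/2)*(N*z-(m:ℝ))^2
              + 0*(N*z-(m:ℝ)) + 0)) (u' x) x := by
            rw [hvalL]
            exact hquad _ _ _ _ _
          have hdr : HasDerivAt (fun z => q*z^2/2 + (c/N^2) * (((1-t)/2)*(N*z-(m:ℝ))^2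
              + (-a)*(N*z-(m:ℝ)) + a^2/2)) (u' x) x := by
            rw [hvalR]
            exact hquad _ _ _ _ _
          exact (glueDeriv hlt1 hlt2 heqL heqR hdl hdr).hasDerivWithinAt
        · rcases lt_trichotomy (N*x - m) (a+t) with hyt | hyt | hyt
          · -- pure branch 2
            have hxm : x ∈ Ioo (((m:ℝ)+a)/N) (((m:ℝ)+a+t)/N) := by
              rw [hmem]
              exact ⟨by linarith, by linarith⟩
            have heq : ∀ z ∈ Ioo (((m:ℝ)+a)/N) (((m:ℝ)+a+t)/N),
                u z = q*z^2/2 + (c/N^2) * (((1-t)/2)*(N*z-(m:ℝ))^2 + (-a)*(N*z-(m:ℝ)) + a^2/2) := by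
              intro z hz
              rw [hmem] at hz
              have hfz : Int.fract (N*z) = N*z - m := hfract m _ (by linarith [hz.1])
                (by linarith [hz.2])
              simp only [hu]
              rw [hfz, if_neg (not_le.mpr (by linarith [hz.1])), if_pos (by linarith [hz.2])]
            have hval : u' x = q*x + (c/N)*(2*((1-t)/2)*(N*x-(m:ℝ)) + (-a)) := by
              simp only [hu']
              rw [hfx, phi2 hya.le hyt.le]
              ring
            have hd := (hquad ((1-t)/2) (-a) (a^2/2) (m:ℝ) x).congr_of_eventuallyEq
              (Filter.eventuallyEq_of_mem (isOpen_Ioo.mem_nhds hxm) heq)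
            rw [hval]
            exact hd.hasDerivWithinAt
          · -- seam y = a + t
            have hlt1 : ((m:ℝ)+a+t/2)/N < x := by
              rw [hd1]
              linarith
            have hlt2 : x < ((m:ℝ)+(a+t+1)/2)/N := by
              rw [hd2]
              linarith
            have hvalL : u' x = q*x + (c/N)*(2*((1-t)/2)*(N*x-(m:ℝ)) + (-a)) := by
              simp only [hu']
              rw [hfx, phi2 (by linarith) (by linarith)]
              ring
            have hvalR : u' x = q*x + (c/N)*(2*(-t/2)*(N*x-(m:ℝ)) + t) := by
              simp only [hu']
              rw [hfx, phi2 (by linarith) (by linarith), hyt]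
              ring
            have heqL : ∀ z ∈ Icc (((m:ℝ)+a+t/2)/N) x,
                u z = q*z^2/2 + (c/N^2) * (((1-t)/2)*(N*z-(m:ℝ))^2 + (-a)*(N*z-(m:ℝ)) + a^2/2) := by
              intro z hz
              have hzl : (m:ℝ)+a+t/2 ≤ N*z := by
                have := hz.1
                rw [hd3] at this
                exact this
              have hzr : N*z ≤ N*x := mul_le_mul_of_nonneg_left hz.2 hN.le
              have hfz : Int.fract (N*z) = N*z - m := hfract m _ (by linarith) (by linarith)
              simp only [hu]
              rw [hfz, if_neg (not_le.mpr (by linarith)), if_pos (by linarith)]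
            have heqR : ∀ z ∈ Icc x (((m:ℝ)+(a+t+1)/2)/N),
                u z = q*z^2/2 + (c/N^2) * ((-t/2)*(N*z-(m:ℝ))^2 + t*(N*z-(m:ℝ))
                  + (t*(1-a)^2/2 - t*(1-a) - t*a^2/2)) := by
              intro z hz
              have hzl : N*x ≤ N*z := mul_le_mul_of_nonneg_left hz.1 hN.le
              have hzr : N*z ≤ (m:ℝ)+(a+t+1)/2 := by
                have := hz.2
                rw [hd4] at this
                exact this
              have hfz : Int.fract (N*z) = N*z - m := hfract m _ (by linarith) (by linarith)
              simp only [hu]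
              rw [hfz]
              rcases eq_or_lt_of_le (by linarith : a+t ≤ N*z - (m:ℝ)) with hze | hze
              · rw [if_neg (not_le.mpr (by linarith)), if_pos hze.symm.le, ← hze]
                linear_combination (c/N^2) * (-t) * ha
              · rw [if_neg (not_le.mpr (by linarith)), if_neg (not_le.mpr hze)]
            have hdl : HasDerivAt (fun z => q*z^2/2 + (c/N^2) * (((1-t)/2)*(N*z-(m:ℝ))^2
                + (-a)*(N*z-(m:ℝ)) + a^2/2)) (u' x) x := by
              rw [hvalL]
              exact hquad _ _ _ _ _
            have hdr : HasDerivAt (fun z => q*z^2/2 + (c/N^2) * ((-t/2)*(N*z-(m:ℝ))^2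
                + t*(N*z-(m:ℝ)) + (t*(1-a)^2/2 - t*(1-a) - t*a^2/2))) (u' x) x := by
              rw [hvalR]
              exact hquad _ _ _ _ _
            exact (glueDeriv hlt1 hlt2 heqL heqR hdl hdr).hasDerivWithinAt
          · -- pure branch 3
            have hxm : x ∈ Ioo (((m:ℝ)+a+t)/N) (((m:ℝ)+1)/N) := by
              rw [hmem]
              exact ⟨by linarith, by linarith⟩
            have heq : ∀ z ∈ Ioo (((m:ℝ)+a+t)/N) (((m:ℝ)+1)/N),
                u z = q*z^2/2 + (c/N^2) * ((-t/2)*(N*z-(m:ℝ))^2 + t*(N*z-(m:ℝ))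
                  + (t*(1-a)^2/2 - t*(1-a) - t*a^2/2)) := by
              intro z hz
              rw [hmem] at hz
              have hfz : Int.fract (N*z) = N*z - m := hfract m _ (by linarith [hz.1])
                (by linarith [hz.2])
              simp only [hu]
              rw [hfz, if_neg (not_le.mpr (by linarith [hz.1])),
                if_neg (not_le.mpr (by linarith [hz.1]))]
            have hval : u' x = q*x + (c/N)*(2*(-t/2)*(N*x-(m:ℝ)) + t) := by
              simp only [hu']
              rw [hfx, phi3 hyt.le]
              ring
            have hd := (hquad (-t/2) t (t*(1-a)^2/2 - t*(1-a) - t*a^2/2) (m:ℝ) x).congr_of_eventuallyEq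
              (Filter.eventuallyEq_of_mem (isOpen_Ioo.mem_nhds hxm) heq)
            rw [hval]
            exact hd.hasDerivWithinAt
  have hIderiv : ∀ x ∈ I, HasDerivAt u' α x := by
    intro x hxI
    rw [hI] at hxI
    simp only [mem_iUnion, exists_prop] at hxI
    obtain ⟨k, hk, hxk⟩ := hxI
    have hxk' := hxk
    rw [hmem] at hxk'
    have hk0 : (0:ℝ) ≤ (k:ℝ) := Nat.cast_nonneg k
    have haff : HasDerivAt (fun z : ℝ => (q + c*(1-t))*z + (c/N)*(-((1-t)*(k:ℝ)) - a))
        (q + c*(1-t)) x := by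
      simpa using (HasDerivAt.const_mul (q + c*(1-t)) (hasDerivAt_id' x)).add_const
        ((c/N)*(-((1-t)*(k:ℝ)) - a))
    have heq : ∀ z ∈ Ioo (((k:ℝ)+a)/N) (((k:ℝ)+a+t)/N),
        u' z = (q + c*(1-t))*z + (c/N)*(-((1-t)*(k:ℝ)) - a) := by
      intro z hz
      rw [hmem] at hz
      have hfz : Int.fract (N*z) = N*z - k := hfract k _ (by linarith [hz.1])
        (by linarith [hz.2])
      simp only [hu']
      rw [hfz, phi2 (by linarith [hz.1]) (by linarith [hz.2])]
      field_simp
      ring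
    have hd := haff.congr_of_eventuallyEq
      (Filter.eventuallyEq_of_mem (isOpen_Ioo.mem_nhds hxk) heq)
    have hα : q + c*(1-t) = α := by rw [hq, hc]; ring
    rw [← hα]
    exact hd
  have hJderiv : ∀ x ∈ J, HasDerivAt u' β x := by
    intro x hxJ
    rw [hJ] at hxJ
    simp only [mem_iUnion, exists_prop, mem_union] at hxJ
    obtain ⟨k, hk, hxk⟩ := hxJ
    have hk0 : (0:ℝ) ≤ (k:ℝ) := Nat.cast_nonneg k
    have hβ : q - c*t = β := by rw [hq, hc]; ring
    rcases hxk with hxk | hxk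
    · have hxk' := hxk
      rw [hmem] at hxk'
      have haff : HasDerivAt (fun z : ℝ => (q - c*t)*z + (c/N)*(t*(k:ℝ)))
          (q - c*t) x := by
        simpa using (HasDerivAt.const_mul (q - c*t) (hasDerivAt_id' x)).add_const
          ((c/N)*(t*(k:ℝ)))
      have heq : ∀ z ∈ Ioo ((k:ℝ)/N) (((k:ℝ)+a)/N),
          u' z = (q - c*t)*z + (c/N)*(t*(k:ℝ)) := by
        intro z hz
        rw [hmem] at hz
        have hfz : Int.fract (N*z) = N*z - k := hfract k _ (by linarith [hz.1])
          (by linarith [hz.2])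
        simp only [hu']
        rw [hfz, phi1 (by linarith [hz.1]) (by linarith [hz.2]) ht0.le]
        field_simp
        ring
      have hd := haff.congr_of_eventuallyEq
        (Filter.eventuallyEq_of_mem (isOpen_Ioo.mem_nhds hxk) heq)
      rw [← hβ]
      exact hd
    · have hxk' := hxk
      rw [hmem] at hxk'
      have haff : HasDerivAt (fun z : ℝ => (q - c*t)*z + (c/N)*(t*(1+(k:ℝ))))
          (q - c*t) x := by
        simpa using (HasDerivAt.const_mul (q - c*t) (hasDerivAt_id' x)).add_const
          ((c/N)*(t*(1+(k:ℝ))))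
      have heq : ∀ z ∈ Ioo (((k:ℝ)+a+t)/N) (((k:ℝ)+1)/N),
          u' z = (q - c*t)*z + (c/N)*(t*(1+(k:ℝ))) := by
        intro z hz
        rw [hmem] at hz
        have hfz : Int.fract (N*z) = N*z - k := hfract k _ (by linarith [hz.1])
          (by linarith [hz.2])
        simp only [hu']
        rw [hfz, phi3 (by linarith [hz.1])]
        field_simp
        ring
      have hd := haff.congr_of_eventuallyEq
        (Filter.eventuallyEq_of_mem (isOpen_Ioo.mem_nhds hxk) heq)
      rw [← hβ]
      exact hd
  refine ⟨I, J, u, u', Real.toNNReal (|q| + 2*|c| * N), 4*|c|/N^2, |c|/N,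
    hIopen, hJopen, hIsub, hJsub, hdisj, hclose, hIvol, hJvol, hderiv, hulip.continuousOn,
    hulip, ?_, ?_, ?_, ?_, ?_, hubd', hδsum, hIderiv, hJderiv⟩
  · simp only [hu, mul_zero, Int.fract_zero]
    rw [if_pos ha0.le]
    ring
  · simp only [hu', mul_zero, Int.fract_zero]
    rw [max_eq_left (by linarith : (0:ℝ)-a ≤ -0), min_eq_right (by nlinarith : -(0:ℝ) ≤ t*(1-0))]
    ring
  · simp only [hu, mul_one]
    rw [show Int.fract N = 0 by rw [hNdef]; exact Int.fract_natCast n, if_pos ha0.le]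
    ring
  · simp only [hu', mul_one]
    rw [show Int.fract N = 0 by rw [hNdef]; exact Int.fract_natCast n,
      phi1 le_rfl ha0.le ht0.le]
    ring
  · intro x hx
    rw [show (1:ℝ)/2*q*x^2 = q*x^2/2 by ring]
    exact hubd x hx
-- degenerate case helper: u = u_t works, with I,J = given sets
private lemma degenerate (α β t ε : ℝ) (hε : 0 < ε) (I J : Set ℝ)
    (hIo : IsOpen I) (hJo : IsOpen J) (hIs : I ⊆ Set.Ioo 0 1) (hJs : J ⊆ Set.Ioo 0 1)
    (hdisj : Disjoint I J) (hcl : closure I ∪ closure J = Set.Icc 0 1)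
    (hvI : volume I = ENNReal.ofReal t) (hvJ : volume J = ENNReal.ofReal (1-t))
    (hIa : ∀ x ∈ I, t * α + (1 - t) * β = α) (hJb : ∀ x ∈ J, t * α + (1 - t) * β = β) :
    ∃ (I J : Set ℝ) (u u' : ℝ → ℝ) (K : NNReal) (δ₁ δ₂ : ℝ),
      IsOpen I ∧ IsOpen J ∧ I ⊆ Set.Ioo 0 1 ∧ J ⊆ Set.Ioo 0 1 ∧ Disjoint I J ∧
      closure I ∪ closure J = Set.Icc 0 1 ∧
      volume I = ENNReal.ofReal t ∧
      volume J = ENNReal.ofReal (1 - t) ∧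
      (∀ x ∈ Set.Icc (0 : ℝ) 1, HasDerivWithinAt u (u' x) (Set.Icc 0 1) x) ∧
      ContinuousOn u' (Set.Icc 0 1) ∧
      LipschitzOnWith K u' (Set.Icc 0 1) ∧
      u 0 = (1 / 2) * (t * α + (1 - t) * β) * (0 : ℝ) ^ 2 ∧
      u' 0 = (t * α + (1 - t) * β) * 0 ∧
      u 1 = (1 / 2) * (t * α + (1 - t) * β) * (1 : ℝ) ^ 2 ∧
      u' 1 = (t * α + (1 - t) * β) * 1 ∧
      (∀ x ∈ Set.Icc (0 : ℝ) 1, |u x - (1 / 2) * (t * α + (1 - t) * β) * x ^ 2| ≤ δ₁) ∧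
      (∀ x ∈ Set.Icc (0 : ℝ) 1, |u' x - (t * α + (1 - t) * β) * x| ≤ δ₂) ∧
      δ₁ + δ₂ < ε ∧
      (∀ x ∈ I, HasDerivAt u' α x) ∧
      (∀ x ∈ J, HasDerivAt u' β x) := by
  set q := t * α + (1 - t) * β with hq
  refine ⟨I, J, fun x => (1/2) * q * x^2, fun x => q * x, ‖q‖₊, ε/4, ε/4,
    hIo, hJo, hIs, hJs, hdisj, hcl, hvI, hvJ, ?_, ?_, ?_, by norm_num, by norm_num,
    by norm_num, by norm_num, ?_, ?_, by linarith, ?_, ?_⟩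
  · intro x hx
    have h := quadDeriv ((1/2)*q) 0 0 x
    have hfun : (fun z : ℝ => (1/2*q)*z^2 + 0*z + 0) = (fun z : ℝ => (1/2) * q * z^2) := by
      funext z; ring
    rw [hfun] at h
    exact (h.congr_deriv (by ring)).hasDerivWithinAt
  · exact (continuous_const.mul continuous_id).continuousOn
  · rw [lipschitzOnWith_iff_dist_le_mul]
    intro x _ y _
    rw [Real.dist_eq, Real.dist_eq, ← mul_sub, abs_mul]
    have : (‖q‖₊ : ℝ) = |q| := by simp [Real.norm_eq_abs]
    rw [this]
  · intro x _; simp [abs_nonneg]; positivity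
  · intro x _; simp [abs_nonneg]; positivity
  · intro x hx
    have h : HasDerivAt (fun z : ℝ => q * z) q x := by
      simpa using (hasDerivAt_id' x).const_mul q
    rw [← hIa x hx]; exact h
  · intro x hx
    have h : HasDerivAt (fun z : ℝ => q * z) q x := by
      simpa using (hasDerivAt_id' x).const_mul q
    rw [← hJb x hx]; exact h

/-- One-dimensional lamination construction: given α, β, t ∈ [0,1] and ε > 0, there exist
disjoint open sets I, J ⊂ (0,1) with |I| = t, |J| = 1−t, closure(I) ∪ closure(J) = [0,1],
and a C¹ function u on [0,1] with Lipschitz derivative u′, matching the quadratic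
u_t(x) = ½(tα+(1−t)β)x² and its derivative at 0 and 1, uniformly ε-close to u_t in C¹,
with u″ = α on I and u″ = β on J. -/
theorem one_dim_lamination (α β t ε : ℝ) (ht : t ∈ Set.Icc (0 : ℝ) 1) (hε : 0 < ε) :
    ∃ (I J : Set ℝ) (u u' : ℝ → ℝ) (K : NNReal) (δ₁ δ₂ : ℝ),
      IsOpen I ∧ IsOpen J ∧ I ⊆ Set.Ioo 0 1 ∧ J ⊆ Set.Ioo 0 1 ∧ Disjoint I J ∧
      closure I ∪ closure J = Set.Icc 0 1 ∧
      volume I = ENNReal.ofReal t ∧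
      volume J = ENNReal.ofReal (1 - t) ∧
      (∀ x ∈ Set.Icc (0 : ℝ) 1, HasDerivWithinAt u (u' x) (Set.Icc 0 1) x) ∧
      ContinuousOn u' (Set.Icc 0 1) ∧
      LipschitzOnWith K u' (Set.Icc 0 1) ∧
      u 0 = (1 / 2) * (t * α + (1 - t) * β) * (0 : ℝ) ^ 2 ∧
      u' 0 = (t * α + (1 - t) * β) * 0 ∧
      u 1 = (1 / 2) * (t * α + (1 - t) * β) * (1 : ℝ) ^ 2 ∧
      u' 1 = (t * α + (1 - t) * β) * 1 ∧
      (∀ x ∈ Set.Icc (0 : ℝ) 1, |u x - (1 / 2) * (t * α + (1 - t) * β) * x ^ 2| ≤ δ₁) ∧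
      (∀ x ∈ Set.Icc (0 : ℝ) 1, |u' x - (t * α + (1 - t) * β) * x| ≤ δ₂) ∧
      δ₁ + δ₂ < ε ∧
      (∀ x ∈ I, HasDerivAt u' α x) ∧
      (∀ x ∈ J, HasDerivAt u' β x) := by
  obtain ⟨ht0, ht1⟩ := ht
  rcases eq_or_lt_of_le ht0 with h0 | h0
  · refine degenerate α β t ε hε ∅ (Set.Ioo 0 1) isOpen_empty isOpen_Ioo
      (Set.empty_subset _) subset_rfl (by simp) ?_ ?_ ?_ (by simp) ?_
    · simp [closure_Ioo (by norm_num : (0:ℝ) ≠ 1)]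
    · simp [← h0]
    · rw [Real.volume_Ioo, ← h0]
    · intro x _
      rw [← h0]
      ring
  rcases eq_or_lt_of_le ht1 with h1 | h1
  · refine degenerate α β t ε hε (Set.Ioo 0 1) ∅ isOpen_Ioo isOpen_empty
      subset_rfl (Set.empty_subset _) (by simp) ?_ ?_ ?_ ?_ (by simp)
    · simp [closure_Ioo (by norm_num : (0:ℝ) ≠ 1)]
    · rw [Real.volume_Ioo, h1]
      norm_num
    · simp [h1]
    · intro x _
      rw [h1]
      ring
  exact main_case α β t ε h0 h1 hε
end

section
/- Let n ∈ ℕ and let f : Symₙ(ℝ) → ℝ be such that there exists a symmetric rank one convex function g : Symₙ(ℝ) → ℝ with g ≤ f pointwise. Then the symmetric rank one convex envelope of f is obtained by iterated lamination: R^sym f(ξ) = inf_{k ∈ ℕ} R^sym_k f(ξ) for every symmetric n×n matrix ξ. -/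
open Matrix Set

/-- A function on symmetric n×n matrices is symmetric rank one convex if it is convex
along symmetric rank-one segments. -/
def SymRankOneConvex (n : ℕ) (h : Matrix (Fin n) (Fin n) ℝ → ℝ) : Prop :=
  ∀ ξ₁ ξ₂ : Matrix (Fin n) (Fin n) ℝ, ξ₁.IsSymm → ξ₂.IsSymm →
    (∃ (α : ℝ) (η : Fin n → ℝ), ξ₁ - ξ₂ = α • Matrix.vecMulVec η η) →
    ∀ t ∈ Set.Icc (0 : ℝ) 1,
      h (t • ξ₁ + (1 - t) • ξ₂) ≤ t * h ξ₁ + (1 - t) * h ξ₂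

/-- Iterated lamination: `R^sym₀ f = f` and `R^sym_{k+1} f(ξ)` is the infimum of
`t R^sym_k f(ξ₁) + (1−t) R^sym_k f(ξ₂)` over symmetric rank-one decompositions of ξ. -/
noncomputable def RsymIter (n : ℕ) (f : Matrix (Fin n) (Fin n) ℝ → ℝ) :
    ℕ → Matrix (Fin n) (Fin n) ℝ → ℝ
  | 0 => f
  | k + 1 => fun ξ =>
      sInf { v : ℝ | ∃ (t : ℝ) (ξ₁ ξ₂ : Matrix (Fin n) (Fin n) ℝ),
        t ∈ Set.Icc (0 : ℝ) 1 ∧ ξ₁.IsSymm ∧ ξ₂.IsSymm ∧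
        t • ξ₁ + (1 - t) • ξ₂ = ξ ∧
        (∃ (α : ℝ) (η : Fin n → ℝ), ξ₁ - ξ₂ = α • Matrix.vecMulVec η η) ∧
        v = t * RsymIter n f k ξ₁ + (1 - t) * RsymIter n f k ξ₂ }

/-- The symmetric rank one convex envelope: the pointwise supremum of all symmetric
rank one convex functions lying below f on the symmetric matrices. -/
noncomputable def RsymEnv (n : ℕ) (f : Matrix (Fin n) (Fin n) ℝ → ℝ)
    (ξ : Matrix (Fin n) (Fin n) ℝ) : ℝ :=
  sSup { v : ℝ | ∃ g : Matrix (Fin n) (Fin n) ℝ → ℝ,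
    SymRankOneConvex n g ∧ (∀ ζ : Matrix (Fin n) (Fin n) ℝ, ζ.IsSymm → g ζ ≤ f ζ) ∧
    v = g ξ }

section Aux

variable {n : ℕ} {f : Matrix (Fin n) (Fin n) ℝ → ℝ}

/-- The lamination set appearing in the successor step of `RsymIter`. -/
def lamSet (n : ℕ) (f : Matrix (Fin n) (Fin n) ℝ → ℝ) (k : ℕ)
    (ξ : Matrix (Fin n) (Fin n) ℝ) : Set ℝ :=
  { v : ℝ | ∃ (t : ℝ) (ξ₁ ξ₂ : Matrix (Fin n) (Fin n) ℝ),
        t ∈ Set.Icc (0 : ℝ) 1 ∧ ξ₁.IsSymm ∧ ξ₂.IsSymm ∧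
        t • ξ₁ + (1 - t) • ξ₂ = ξ ∧
        (∃ (α : ℝ) (η : Fin n → ℝ), ξ₁ - ξ₂ = α • Matrix.vecMulVec η η) ∧
        v = t * RsymIter n f k ξ₁ + (1 - t) * RsymIter n f k ξ₂ }

lemma RsymIter_succ (k : ℕ) (ξ : Matrix (Fin n) (Fin n) ℝ) :
    RsymIter n f (k + 1) ξ = sInf (lamSet n f k ξ) := rfl

lemma mem_lamSet_self (k : ℕ) {ξ : Matrix (Fin n) (Fin n) ℝ} (hξ : ξ.IsSymm) :
    RsymIter n f k ξ ∈ lamSet n f k ξ :=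
  ⟨1, ξ, ξ, ⟨zero_le_one, le_refl 1⟩, hξ, hξ, by simp, ⟨0, 0, by simp⟩, by ring⟩

/-- Any symmetric rank one convex minorant of `f` lies below every iterate. -/
lemma src_le_iter {g : Matrix (Fin n) (Fin n) ℝ → ℝ} (hg : SymRankOneConvex n g)
    (hgf : ∀ ζ : Matrix (Fin n) (Fin n) ℝ, ζ.IsSymm → g ζ ≤ f ζ) :
    ∀ k (ζ : Matrix (Fin n) (Fin n) ℝ), ζ.IsSymm → g ζ ≤ RsymIter n f k ζ := by
  intro k
  induction k with
  | zero => exact hgf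
  | succ k ih =>
    intro ζ hζ
    rw [RsymIter_succ]
    refine le_csInf ⟨_, mem_lamSet_self k hζ⟩ ?_
    rintro v ⟨t, ξ₁, ξ₂, ⟨ht0, ht1⟩, h₁, h₂, hsum, hro, rfl⟩
    have h1t : (0:ℝ) ≤ 1 - t := by linarith
    calc g ζ = g (t • ξ₁ + (1 - t) • ξ₂) := by rw [hsum]
      _ ≤ t * g ξ₁ + (1 - t) * g ξ₂ := hg ξ₁ ξ₂ h₁ h₂ hro t ⟨ht0, ht1⟩
      _ ≤ t * RsymIter n f k ξ₁ + (1 - t) * RsymIter n f k ξ₂ := by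
          have := ih ξ₁ h₁
          have := ih ξ₂ h₂
          nlinarith

lemma src_lowerBound_lamSet {g : Matrix (Fin n) (Fin n) ℝ → ℝ}
    (hg : SymRankOneConvex n g)
    (hgf : ∀ ζ : Matrix (Fin n) (Fin n) ℝ, ζ.IsSymm → g ζ ≤ f ζ)
    (k : ℕ) {ζ : Matrix (Fin n) (Fin n) ℝ} (_hζ : ζ.IsSymm) :
    g ζ ∈ lowerBounds (lamSet n f k ζ) := by
  rintro v ⟨t, ξ₁, ξ₂, ⟨ht0, ht1⟩, h₁, h₂, hsum, hro, rfl⟩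
  have h1t : (0:ℝ) ≤ 1 - t := by linarith
  calc g ζ = g (t • ξ₁ + (1 - t) • ξ₂) := by rw [hsum]
    _ ≤ t * g ξ₁ + (1 - t) * g ξ₂ := hg ξ₁ ξ₂ h₁ h₂ hro t ⟨ht0, ht1⟩
    _ ≤ t * RsymIter n f k ξ₁ + (1 - t) * RsymIter n f k ξ₂ := by
        have := src_le_iter hg hgf k ξ₁ h₁
        have := src_le_iter hg hgf k ξ₂ h₂
        nlinarith

end Aux

/-- If some symmetric rank one convex function lies below f, then the symmetric rank one
convex envelope of f is obtained by iterated lamination: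
R^sym f(ξ) = inf_k R^sym_k f(ξ) for every symmetric ξ. -/
theorem RsymEnv_eq_iInf_RsymIter (n : ℕ)
    (f : Matrix (Fin n) (Fin n) ℝ → ℝ)
    (hex : ∃ g : Matrix (Fin n) (Fin n) ℝ → ℝ, SymRankOneConvex n g ∧
      ∀ ζ : Matrix (Fin n) (Fin n) ℝ, ζ.IsSymm → g ζ ≤ f ζ)
    (ξ : Matrix (Fin n) (Fin n) ℝ) (hξ : ξ.IsSymm) :
    RsymEnv n f ξ = ⨅ k : ℕ, RsymIter n f k ξ := by
  obtain ⟨g, hg, hgf⟩ := hex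
  set F : Matrix (Fin n) (Fin n) ℝ → ℝ := fun ζ => ⨅ k : ℕ, RsymIter n f k ζ with hF
  have hbdd : ∀ ζ : Matrix (Fin n) (Fin n) ℝ, ζ.IsSymm →
      BddBelow (Set.range fun k => RsymIter n f k ζ) := by
    intro ζ hζ
    exact ⟨g ζ, by rintro v ⟨k, rfl⟩; exact src_le_iter hg hgf k ζ hζ⟩
  -- antitonicity of the iterates
  have hanti : ∀ ζ : Matrix (Fin n) (Fin n) ℝ, ζ.IsSymm →
      Antitone (fun k => RsymIter n f k ζ) := by
    intro ζ hζ
    apply antitone_nat_of_succ_le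
    intro k
    rw [RsymIter_succ]
    exact csInf_le ⟨g ζ, src_lowerBound_lamSet hg hgf k hζ⟩ (mem_lamSet_self k hζ)
  -- F is below f on symmetric matrices
  have hFle : ∀ ζ : Matrix (Fin n) (Fin n) ℝ, ζ.IsSymm → F ζ ≤ f ζ := by
    intro ζ hζ
    exact ciInf_le (hbdd ζ hζ) 0
  -- F is symmetric rank one convex
  have hFsrc : SymRankOneConvex n F := by
    intro ξ₁ ξ₂ h₁ h₂ hro t ht
    obtain ⟨ht0, ht1⟩ := ht
    have h1t : (0:ℝ) ≤ 1 - t := by linarith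
    set ζ := t • ξ₁ + (1 - t) • ξ₂ with hζdef
    have hζ : ζ.IsSymm := by
      unfold Matrix.IsSymm
      rw [hζdef, Matrix.transpose_add, Matrix.transpose_smul, Matrix.transpose_smul, h₁, h₂]
    refine le_of_forall_pos_le_add ?_
    intro ε hε
    obtain ⟨k, hk⟩ : ∃ k, RsymIter n f k ξ₁ < F ξ₁ + ε := by
      refine exists_lt_of_ciInf_lt ?_
      linarith [le_refl (F ξ₁)]
    obtain ⟨l, hl⟩ : ∃ l, RsymIter n f l ξ₂ < F ξ₂ + ε := by
      refine exists_lt_of_ciInf_lt ?_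
      linarith [le_refl (F ξ₂)]
    set m := max k l with hm
    have hk' : RsymIter n f m ξ₁ < F ξ₁ + ε :=
      lt_of_le_of_lt (hanti ξ₁ h₁ (le_max_left k l)) hk
    have hl' : RsymIter n f m ξ₂ < F ξ₂ + ε :=
      lt_of_le_of_lt (hanti ξ₂ h₂ (le_max_right k l)) hl
    have step : RsymIter n f (m + 1) ζ ≤
        t * RsymIter n f m ξ₁ + (1 - t) * RsymIter n f m ξ₂ := by
      rw [RsymIter_succ]
      exact csInf_le ⟨g ζ, src_lowerBound_lamSet hg hgf m hζ⟩
        ⟨t, ξ₁, ξ₂, ⟨ht0, ht1⟩, h₁, h₂, rfl, hro, rfl⟩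
    have hFζ : F ζ ≤ RsymIter n f (m + 1) ζ := ciInf_le (hbdd ζ hζ) (m + 1)
    nlinarith
  -- now compute the envelope
  have hub : ∀ v ∈ { v : ℝ | ∃ g' : Matrix (Fin n) (Fin n) ℝ → ℝ,
      SymRankOneConvex n g' ∧ (∀ ζ : Matrix (Fin n) (Fin n) ℝ, ζ.IsSymm → g' ζ ≤ f ζ) ∧
      v = g' ξ }, v ≤ F ξ := by
    rintro v ⟨g', hg', hg'f, rfl⟩
    exact le_ciInf fun k => src_le_iter hg' hg'f k ξ hξ
  have hmem : F ξ ∈ { v : ℝ | ∃ g' : Matrix (Fin n) (Fin n) ℝ → ℝ,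
      SymRankOneConvex n g' ∧ (∀ ζ : Matrix (Fin n) (Fin n) ℝ, ζ.IsSymm → g' ζ ≤ f ζ) ∧
      v = g' ξ } := ⟨F, hFsrc, hFle, rfl⟩
  unfold RsymEnv
  exact le_antisymm (csSup_le ⟨F ξ, hmem⟩ hub) (le_csSup ⟨F ξ, hub⟩ hmem)
end
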